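/- For every odd n, t(n) ≤ 0.125·n² = n²/8. That is, every peaceful battle (B,W) on the n×n torus 𝕋_n with |B| = |W| and n odd satisfies |B| ≤ n²/8. -/

import Mathlib

open Finset

/-- The cells of the `n × n` board, i.e. `[n] × [n]` with `[n] = {1, …, n}`. -/
def cells (n : ℕ) : Finset (ℕ × ℕ) := Finset.Icc 1 n ×ˢ Finset.Icc 1 n

/-- The hyperedges of the `n × n` torus `𝕋_n`: rows, columns, `ℤ_n`-diagonals and
`ℤ_n`-skew-diagonals. -/
def torusEdges (n : ℕ) : Set (Finset (ℕ × ℕ)) :=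
  {e | (∃ i ∈ Finset.Icc 1 n, e = (cells n).filter (fun p => p.1 = i)) ∨
       (∃ j ∈ Finset.Icc 1 n, e = (cells n).filter (fun p => p.2 = j)) ∨
       (∃ k : ZMod n, e = (cells n).filter (fun p => (p.1 : ZMod n) - (p.2 : ZMod n) = k)) ∨
       (∃ k : ZMod n, e = (cells n).filter (fun p => (p.1 : ZMod n) + (p.2 : ZMod n) = k))}

/-- A peaceful battle on the `n × n` torus `𝕋_n`: disjoint sets `B, W ⊆ [n] × [n]` such that
no hyperedge meets both. -/
def IsPeacefulTorus (n : ℕ) (B W : Finset (ℕ × ℕ)) : Prop :=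
  B ⊆ cells n ∧ W ⊆ cells n ∧ Disjoint B W ∧
    ∀ e ∈ torusEdges n, e ∩ B = ∅ ∨ e ∩ W = ∅

/-- `t n` : the largest `m` so that some peaceful battle `(B, W)` on `𝕋_n` has `|B| = |W| = m`. -/
noncomputable def t (n : ℕ) : ℕ :=
  sSup {m : ℕ | ∃ B W : Finset (ℕ × ℕ), IsPeacefulTorus n B W ∧ B.card = m ∧ W.card = m}

namespace OTUB

variable {n : ℕ}

/-- Representative of a residue class in `[1, n]`. -/
def liftZ (n : ℕ) [NeZero n] (c : ZMod n) : ℕ := if c.val = 0 then n else c.val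

lemma liftZ_mem [NeZero n] (c : ZMod n) : liftZ n c ∈ Finset.Icc 1 n := by
  have h := ZMod.val_lt c
  have h0 : 0 < n := Nat.pos_of_ne_zero (NeZero.ne n)
  unfold liftZ
  split <;> simp only [Finset.mem_Icc] <;> omega

lemma cast_liftZ [NeZero n] (c : ZMod n) : ((liftZ n c : ℕ) : ZMod n) = c := by
  unfold liftZ
  split
  · rename_i h
    rw [ZMod.natCast_self]
    exact ((ZMod.val_eq_zero c).mp h).symm
  · exact ZMod.natCast_zmod_val c

lemma cast_inj_Icc [NeZero n] {i j : ℕ} (hi : i ∈ Finset.Icc 1 n) (hj : j ∈ Finset.Icc 1 n)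
    (h : (i : ZMod n) = (j : ZMod n)) : i = j := by
  simp only [Finset.mem_Icc] at hi hj
  have key : ∀ a b : ℕ, a ≤ b → 1 ≤ a → b ≤ n → a ≡ b [MOD n] → a = b := by
    intro a b hab h1 h2 hm
    have hd := (Nat.modEq_iff_dvd' hab).mp hm
    rcases Nat.eq_zero_or_pos (b - a) with h0 | hp
    · omega
    · have := Nat.le_of_dvd hp hd; omega
  have h' := (ZMod.natCast_eq_natCast_iff i j n).mp h
  rcases le_total i j with hle | hle
  · exact key i j hle hi.1 hj.2 h'
  · exact (key j i hle hj.1 hi.2 h'.symm).symm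

/-- Linear automorphism of `(ZMod n)²` with unit determinant. -/
def linEquiv (a b a' b' e : ZMod n) (h : e * (a * b' - b * a') = 1) :
    (ZMod n × ZMod n) ≃ (ZMod n × ZMod n) where
  toFun v := (a * v.1 + b * v.2, a' * v.1 + b' * v.2)
  invFun w := (e * (b' * w.1 - b * w.2), e * (a * w.2 - a' * w.1))
  left_inv v := by
    apply Prod.ext
    · show e * (b' * (a * v.1 + b * v.2) - b * (a' * v.1 + b' * v.2)) = v.1
      linear_combination v.1 * h
    · show e * (a * (a' * v.1 + b' * v.2) - a' * (a * v.1 + b * v.2)) = v.2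
      linear_combination v.2 * h
  right_inv w := by
    apply Prod.ext
    · show a * (e * (b' * w.1 - b * w.2)) + b * (e * (a * w.2 - a' * w.1)) = w.1
      linear_combination w.1 * h
    · show a' * (e * (b' * w.1 - b * w.2)) + b' * (e * (a * w.2 - a' * w.1)) = w.2
      linear_combination w.2 * h

lemma sum_lin_mul [NeZero n] {L L' : ZMod n × ZMod n → ZMod n} {a b a' b' e : ZMod n}
    (hL : ∀ v, L v = a * v.1 + b * v.2) (hL' : ∀ v, L' v = a' * v.1 + b' * v.2)
    (h : e * (a * b' - b * a') = 1) (F G : ZMod n → ℝ) :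
    ∑ v : ZMod n × ZMod n, F (L v) * G (L' v) = (∑ t, F t) * (∑ t, G t) := by
  have h2 : ∑ v : ZMod n × ZMod n, F (L v) * G (L' v)
      = ∑ w : ZMod n × ZMod n, F w.1 * G w.2 := by
    apply Fintype.sum_equiv (linEquiv a b a' b' e h)
    intro v
    simp [linEquiv, hL, hL']
  rw [h2, Fintype.sum_prod_type, ← Finset.sum_mul_sum]

/-- Direction coefficients for rows, columns, diagonals, skew-diagonals. -/
def dirA (n : ℕ) (k : Fin 4) : ZMod n := if k = 1 then 0 else 1

def dirB (n : ℕ) (k : Fin 4) : ZMod n :=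
  if k = 0 then 0 else if k = 2 then -1 else 1

def lins (n : ℕ) (k : Fin 4) (v : ZMod n × ZMod n) : ZMod n :=
  dirA n k * v.1 + dirB n k * v.2

lemma two_inv (hn : Odd n) : ∃ c : ZMod n, c * 2 = 1 := by
  obtain ⟨k, hk⟩ := hn
  refine ⟨((k + 1 : ℕ) : ZMod n), ?_⟩
  have h1 : ((k + 1 : ℕ) : ZMod n) * 2 = ((2 * k + 2 : ℕ) : ZMod n) := by push_cast; ring
  have h2 : (2 * k + 2 : ℕ) = n + 1 := by omega
  rw [h1, h2]
  push_cast [ZMod.natCast_self]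
  ring

lemma fin4_cases (k : Fin 4) : k = 0 ∨ k = 1 ∨ k = 2 ∨ k = 3 := by
  fin_cases k <;> simp

lemma dirA0 : dirA n 0 = 1 := if_neg (by decide)
lemma dirA1 : dirA n 1 = 0 := if_pos rfl
lemma dirA2 : dirA n 2 = 1 := if_neg (by decide)
lemma dirA3 : dirA n 3 = 1 := if_neg (by decide)
lemma dirB0 : dirB n 0 = 0 := if_pos rfl
lemma dirB1 : dirB n 1 = 1 := by rw [dirB, if_neg (by decide), if_neg (by decide)]
lemma dirB2 : dirB n 2 = -1 := by rw [dirB, if_neg (by decide), if_pos rfl]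
lemma dirB3 : dirB n 3 = 1 := by rw [dirB, if_neg (by decide), if_neg (by decide)]

lemma lins0 (v : ZMod n × ZMod n) : lins n 0 v = v.1 := by
  rw [lins, dirA0, dirB0]; ring
lemma lins1 (v : ZMod n × ZMod n) : lins n 1 v = v.2 := by
  rw [lins, dirA1, dirB1]; ring
lemma lins2 (v : ZMod n × ZMod n) : lins n 2 v = v.1 - v.2 := by
  rw [lins, dirA2, dirB2]; ring
lemma lins3 (v : ZMod n × ZMod n) : lins n 3 v = v.1 + v.2 := by
  rw [lins, dirA3, dirB3]; ring

lemma det_unit (hn : Odd n) (k k' : Fin 4) (h : k ≠ k') :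
    ∃ e : ZMod n, e * (dirA n k * dirB n k' - dirB n k * dirA n k') = 1 := by
  obtain ⟨c, hc⟩ := two_inv hn
  rcases fin4_cases k with rfl | rfl | rfl | rfl <;>
    rcases fin4_cases k' with rfl | rfl | rfl | rfl <;>
    simp only [dirA0, dirA1, dirA2, dirA3, dirB0, dirB1, dirB2, dirB3] <;>
    first
      | exact absurd rfl h
      | (refine ⟨1, ?_⟩; ring1)
      | (refine ⟨-1, ?_⟩; ring1)
      | (refine ⟨c, ?_⟩; linear_combination hc)
      | (refine ⟨-c, ?_⟩; linear_combination hc)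

lemma key_pair (hn : Odd n) [NeZero n] (F G : ZMod n → ℝ) (k k' : Fin 4) (h : k ≠ k') :
    ∑ v : ZMod n × ZMod n, F (lins n k v) * G (lins n k' v) = (∑ t, F t) * (∑ t, G t) := by
  obtain ⟨e, he⟩ := det_unit hn k k' h
  exact sum_lin_mul (fun v => rfl) (fun v => rfl) he F G

def pk (k : Fin 4) : Fin 4 :=
  if k = 0 then 1 else if k = 1 then 0 else if k = 2 then 3 else 2

lemma key_one (hn : Odd n) [NeZero n] (F : ZMod n → ℝ) (k : Fin 4) :
    ∑ v : ZMod n × ZMod n, F (lins n k v) = (n : ℝ) * ∑ t, F t := by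
  have hne : k ≠ pk k := by fin_cases k <;> decide
  have h := key_pair hn F (fun _ => (1 : ℝ)) k (pk k) hne
  simp only [mul_one] at h
  rw [h, Finset.sum_const, Finset.card_univ, ZMod.card, nsmul_eq_mul, mul_one, mul_comm]

/-- Every "line" (level set of one of the four linear forms, pulled back to the board)
is a hyperedge of the torus. -/
lemma lineEdge_mem [NeZero n] (k : Fin 4) (t : ZMod n) :
    (cells n).filter (fun p => lins n k ((p.1 : ZMod n), (p.2 : ZMod n)) = t)
      ∈ torusEdges n := by
  have hcell : ∀ p : ℕ × ℕ, p ∈ cells n → p.1 ∈ Finset.Icc 1 n ∧ p.2 ∈ Finset.Icc 1 n := by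
    intro p hp
    simpa [cells, Finset.mem_product] using hp
  rcases fin4_cases k with rfl | rfl | rfl | rfl
  · left
    refine ⟨liftZ n t, liftZ_mem t, ?_⟩
    apply Finset.filter_congr
    intro p hp
    simp only [lins0]
    constructor
    · intro h
      exact cast_inj_Icc (hcell p hp).1 (liftZ_mem t) (by rw [h, cast_liftZ])
    · intro h
      rw [h, cast_liftZ]
  · right; left
    refine ⟨liftZ n t, liftZ_mem t, ?_⟩
    apply Finset.filter_congr
    intro p hp
    simp only [lins1]
    constructor
    · intro h
      exact cast_inj_Icc (hcell p hp).2 (liftZ_mem t) (by rw [h, cast_liftZ])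
    · intro h
      rw [h, cast_liftZ]
  · right; right; left
    refine ⟨t, ?_⟩
    apply Finset.filter_congr
    intro p _
    simp only [lins2]
  · right; right; right
    refine ⟨t, ?_⟩
    apply Finset.filter_congr
    intro p _
    simp only [lins3]

/-- The per-direction Cauchy–Schwarz bound. -/
lemma dir_bound [NeZero n] (F G : ZMod n → ℝ) (m : ℝ) (hm : 0 < m)
    (hF0 : ∀ t, 0 ≤ F t) (hG0 : ∀ t, 0 ≤ G t)
    (hFs : ∑ t, F t = m) (hGs : ∑ t, G t = m)
    (hz : ∀ t, F t = 0 ∨ G t = 0) :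
    4 * m ^ 2 / n ≤ ∑ t, (F t - G t) ^ 2 := by
  classical
  set sF := Finset.univ.filter (fun t => F t ≠ 0) with hsF
  set sG := Finset.univ.filter (fun t => G t ≠ 0) with hsG
  have hFs' : ∑ t ∈ sF, F t = m := by rw [hsF, Finset.sum_filter_ne_zero, hFs]
  have hGs' : ∑ t ∈ sG, G t = m := by rw [hsG, Finset.sum_filter_ne_zero, hGs]
  have haN : sF.Nonempty := by
    rw [Finset.nonempty_iff_ne_empty]
    intro h
    rw [h, Finset.sum_empty] at hFs'
    exact hm.ne' hFs'.symm
  have hbN : sG.Nonempty := by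
    rw [Finset.nonempty_iff_ne_empty]
    intro h
    rw [h, Finset.sum_empty] at hGs'
    exact hm.ne' hGs'.symm
  set a : ℝ := (sF.card : ℝ) with ha
  set b : ℝ := (sG.card : ℝ) with hb
  have ha0 : 0 < a := by
    rw [ha]; exact_mod_cast Finset.card_pos.mpr haN
  have hb0 : 0 < b := by
    rw [hb]; exact_mod_cast Finset.card_pos.mpr hbN
  have hdisjs : Disjoint sF sG := by
    rw [Finset.disjoint_left]
    intro x hx hy
    simp only [hsF, Finset.mem_filter] at hx
    simp only [hsG, Finset.mem_filter] at hy
    rcases hz x with h | h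
    · exact hx.2 h
    · exact hy.2 h
  have hab : a + b ≤ (n : ℝ) := by
    have h2 : (sF ∪ sG).card ≤ n := by
      have h3 := Finset.card_le_univ (sF ∪ sG)
      simpa [ZMod.card] using h3
    rw [Finset.card_union_of_disjoint hdisjs] at h2
    rw [ha, hb]
    exact_mod_cast h2
  have hCSF : m ^ 2 ≤ a * ∑ t, (F t) ^ 2 := by
    have h1 : (∑ t ∈ sF, F t) ^ 2 ≤ sF.card * ∑ t ∈ sF, (F t) ^ 2 :=
      sq_sum_le_card_mul_sum_sq
    have h2 : ∑ t ∈ sF, (F t) ^ 2 ≤ ∑ t, (F t) ^ 2 :=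
      Finset.sum_le_sum_of_subset_of_nonneg (Finset.filter_subset _ _)
        (fun t _ _ => sq_nonneg _)
    rw [hFs'] at h1
    calc m ^ 2 ≤ (sF.card : ℝ) * ∑ t ∈ sF, (F t) ^ 2 := h1
      _ ≤ a * ∑ t, (F t) ^ 2 := by
          rw [ha]
          exact mul_le_mul_of_nonneg_left h2 (by positivity)
  have hCSG : m ^ 2 ≤ b * ∑ t, (G t) ^ 2 := by
    have h1 : (∑ t ∈ sG, G t) ^ 2 ≤ sG.card * ∑ t ∈ sG, (G t) ^ 2 :=
      sq_sum_le_card_mul_sum_sq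
    have h2 : ∑ t ∈ sG, (G t) ^ 2 ≤ ∑ t, (G t) ^ 2 :=
      Finset.sum_le_sum_of_subset_of_nonneg (Finset.filter_subset _ _)
        (fun t _ _ => sq_nonneg _)
    rw [hGs'] at h1
    calc m ^ 2 ≤ (sG.card : ℝ) * ∑ t ∈ sG, (G t) ^ 2 := h1
      _ ≤ b * ∑ t, (G t) ^ 2 := by
          rw [hb]
          exact mul_le_mul_of_nonneg_left h2 (by positivity)
  have hXF : m ^ 2 / a ≤ ∑ t, (F t) ^ 2 := by
    rw [div_le_iff₀ ha0]
    calc m ^ 2 ≤ a * ∑ t, (F t) ^ 2 := hCSF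
      _ = (∑ t, (F t) ^ 2) * a := by ring
  have hXG : m ^ 2 / b ≤ ∑ t, (G t) ^ 2 := by
    rw [div_le_iff₀ hb0]
    calc m ^ 2 ≤ b * ∑ t, (G t) ^ 2 := hCSG
      _ = (∑ t, (G t) ^ 2) * b := by ring
  have hn0 : (0 : ℝ) < n := lt_of_lt_of_le (by linarith) hab
  have hkey : 4 * m ^ 2 / n ≤ m ^ 2 / a + m ^ 2 / b := by
    rw [div_add_div _ _ (ne_of_gt ha0) (ne_of_gt hb0), div_le_div_iff₀ hn0 (by positivity)]
    have h4 : 4 * (a * b) ≤ (a + b) * (a + b) := by nlinarith [sq_nonneg (a - b)]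
    have h5 : (a + b) * (a + b) ≤ (a + b) * n := mul_le_mul_of_nonneg_left hab (by positivity)
    nlinarith [mul_le_mul_of_nonneg_left (h4.trans h5) (sq_nonneg m)]
  have hsum : ∑ t, (F t - G t) ^ 2 = ∑ t, (F t) ^ 2 + ∑ t, (G t) ^ 2 := by
    rw [← Finset.sum_add_distrib]
    apply Finset.sum_congr rfl
    intro x _
    rcases hz x with h | h <;> rw [h] <;> ring
  rw [hsum]
  linarith

end OTUB

open OTUB in
/-- **Odd torus upper bound.** For every odd `n`, every peaceful battle `(B, W)` on `𝕋_n`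
with `|B| = |W|` satisfies `|B| ≤ n² / 8`. -/
theorem odd_torus_upper_bound (n : ℕ) (hn : Odd n) (B W : Finset (ℕ × ℕ))
    (hBW : IsPeacefulTorus n B W) (hcard : B.card = W.card) :
    (B.card : ℝ) ≤ (n : ℝ) ^ 2 / 8 := by
  classical
  haveI : NeZero n := ⟨hn.pos.ne'⟩
  have hn1 : 0 < n := hn.pos
  obtain ⟨hBc, hWc, hdisj, hpe⟩ := hBW
  by_cases hB0 : B.card = 0
  · rw [hB0]
    push_cast
    positivity
  -- transfer to (ZMod n)²
  set π : ℕ × ℕ → ZMod n × ZMod n := fun p => ((p.1 : ZMod n), (p.2 : ZMod n)) with hπdef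
  have hπinj : ∀ p ∈ cells n, ∀ q ∈ cells n, π p = π q → p = q := by
    intro p hp q hq hpq
    simp only [cells, Finset.mem_product] at hp hq
    have h1 := cast_inj_Icc hp.1 hq.1 (congrArg Prod.fst hpq)
    have h2 := cast_inj_Icc hp.2 hq.2 (congrArg Prod.snd hpq)
    exact Prod.ext h1 h2
  set B' := B.image π with hB'
  set W' := W.image π with hW'
  have hcardB' : B'.card = B.card :=
    Finset.card_image_of_injOn (fun p hp q hq h => hπinj p (hBc hp) q (hBc hq) h)
  have hcardW' : W'.card = W.card :=
    Finset.card_image_of_injOn (fun p hp q hq h => hπinj p (hWc hp) q (hWc hq) h)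
  have hdisj' : Disjoint B' W' := by
    rw [Finset.disjoint_left]
    intro v hv hw
    obtain ⟨p, hp, rfl⟩ := Finset.mem_image.mp hv
    obtain ⟨q, hq, hqe⟩ := Finset.mem_image.mp hw
    have hqp : q = p := hπinj q (hWc hq) p (hBc hp) hqe
    subst hqp
    exact (Finset.disjoint_left.mp hdisj hp) hq
  set m : ℝ := (B.card : ℝ) with hm
  have hmpos : 0 < m := by
    rw [hm]
    exact_mod_cast Nat.pos_of_ne_zero hB0
  set u : ZMod n × ZMod n → ℝ :=
    fun v => (if v ∈ B' then 1 else 0) - (if v ∈ W' then 1 else 0) with hu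
  have hcardcast : ((B'.card : ℝ) = m) ∧ ((W'.card : ℝ) = m) := by
    constructor
    · rw [hcardB', hm]
    · rw [hcardW', ← hcard, hm]
  have husum : ∑ v, u v = 0 := by
    rw [hu]
    rw [Finset.sum_sub_distrib]
    rw [Finset.sum_boole, Finset.sum_boole]
    simp only [Finset.filter_mem_eq_inter, Finset.univ_inter]
    rw [hcardcast.1, hcardcast.2]
    ring
  have husq : ∑ v, (u v) ^ 2 = 2 * m := by
    have hpt : ∀ v, (u v) ^ 2 = (if v ∈ B' then (1:ℝ) else 0) + (if v ∈ W' then 1 else 0) := by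
      intro v
      by_cases hb : v ∈ B'
      · have hw : v ∉ W' := Finset.disjoint_left.mp hdisj' hb
        simp [hu, hb, hw]
      · by_cases hw : v ∈ W' <;> simp [hu, hb, hw]
    rw [Finset.sum_congr rfl (fun v _ => hpt v)]
    rw [Finset.sum_add_distrib, Finset.sum_boole, Finset.sum_boole]
    simp only [Finset.filter_mem_eq_inter, Finset.univ_inter]
    rw [hcardcast.1, hcardcast.2]
    ring
  set S : Fin 4 → ZMod n → ℝ :=
    fun k t => ∑ v : ZMod n × ZMod n, if lins n k v = t then u v else 0 with hS
  set P : Fin 4 → ℝ := fun k => ∑ t : ZMod n, (S k t) ^ 2 with hP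
  have hSsum : ∀ k, ∑ t, S k t = 0 := by
    intro k
    rw [hS]
    rw [Finset.sum_comm]
    simp only [Finset.sum_ite_eq, Finset.mem_univ, if_true]
    exact husum
  have huS : ∀ k, ∑ v, u v * S k (lins n k v) = P k := by
    intro k
    have hstep : ∀ t, (S k t) ^ 2 = ∑ v, if lins n k v = t then u v * S k t else 0 := by
      intro t
      rw [sq]
      conv_lhs => rw [hS]
      rw [Finset.sum_mul]
      apply Finset.sum_congr rfl
      intro v _
      split <;> simp [hS]
    simp only [hP]
    rw [Finset.sum_congr rfl (fun t _ => hstep t)]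
    rw [Finset.sum_comm]
    simp only [Finset.sum_ite_eq, Finset.mem_univ, if_true]
  have hdiagm : ∀ k, ∑ v, S k (lins n k v) * S k (lins n k v) = (n : ℝ) * P k := by
    intro k
    have h := key_one hn (fun t => S k t * S k t) k
    rw [h, hP]
    congr 1
    apply Finset.sum_congr rfl
    intro t _
    rw [sq]
  have hcross : ∀ k k', k ≠ k' → ∑ v, S k (lins n k v) * S k' (lins n k' v) = 0 := by
    intro k k' h
    rw [key_pair hn (S k) (S k') k k' h, hSsum k, zero_mul]
  set T : ZMod n × ZMod n → ℝ := fun v => ∑ k, S k (lins n k v) with hT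
  have hTsq : ∑ v, (T v) ^ 2 = (n : ℝ) * ∑ k, P k := by
    have h1 : ∀ v, (T v) ^ 2 = ∑ k : Fin 4, ∑ k' : Fin 4,
        S k (lins n k v) * S k' (lins n k' v) := by
      intro v
      rw [hT, sq, Finset.sum_mul_sum]
    rw [Finset.sum_congr rfl (fun v _ => h1 v)]
    rw [Finset.sum_comm]
    have h2 : ∀ k : Fin 4, ∑ v : ZMod n × ZMod n, ∑ k' : Fin 4,
        S k (lins n k v) * S k' (lins n k' v) = (n : ℝ) * P k := by
      intro k
      rw [Finset.sum_comm]
      rw [Finset.sum_eq_single k]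
      · exact hdiagm k
      · intro k' _ hne
        exact hcross k k' (Ne.symm hne)
      · intro h
        exact absurd (Finset.mem_univ k) h
    rw [Finset.sum_congr rfl (fun k _ => h2 k), ← Finset.mul_sum]
  have huT : ∑ v, u v * T v = ∑ k, P k := by
    have h1 : ∀ v, u v * T v = ∑ k : Fin 4, u v * S k (lins n k v) := by
      intro v
      rw [hT, Finset.mul_sum]
    rw [Finset.sum_congr rfl (fun v _ => h1 v)]
    rw [Finset.sum_comm]
    exact Finset.sum_congr rfl (fun k _ => huS k)
  have hnR : (0 : ℝ) < n := by exact_mod_cast hn1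
  have hmaster : ∑ k, P k ≤ 2 * m * n := by
    have h0 : (0:ℝ) ≤ ∑ v, ((n : ℝ) * u v - T v) ^ 2 :=
      Finset.sum_nonneg fun v _ => sq_nonneg _
    have hexp : ∑ v, ((n : ℝ) * u v - T v) ^ 2
        = (n : ℝ) ^ 2 * (∑ v, (u v) ^ 2) - 2 * n * (∑ v, u v * T v) + ∑ v, (T v) ^ 2 := by
      rw [Finset.mul_sum, Finset.mul_sum, ← Finset.sum_sub_distrib, ← Finset.sum_add_distrib]
      apply Finset.sum_congr rfl
      intro v _
      ring
    rw [hexp, husq, huT, hTsq] at h0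
    nlinarith [h0, hnR]
  -- lower bound for each direction
  have hPge : ∀ k, 4 * m ^ 2 / n ≤ P k := by
    intro k
    set F : ZMod n → ℝ :=
      fun t => ∑ v : ZMod n × ZMod n,
        if lins n k v = t then (if v ∈ B' then (1:ℝ) else 0) else 0 with hF
    set G : ZMod n → ℝ :=
      fun t => ∑ v : ZMod n × ZMod n,
        if lins n k v = t then (if v ∈ W' then (1:ℝ) else 0) else 0 with hG
    have hFS : ∀ t, S k t = F t - G t := by
      intro t
      rw [hS, hF, hG, ← Finset.sum_sub_distrib]
      apply Finset.sum_congr rfl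
      intro v _
      by_cases h : lins n k v = t <;> simp [h, hu]
    have hF0 : ∀ t, 0 ≤ F t := by
      intro t
      apply Finset.sum_nonneg
      intro v _
      split <;> [skip; exact le_refl 0]
      split <;> norm_num
    have hG0 : ∀ t, 0 ≤ G t := by
      intro t
      apply Finset.sum_nonneg
      intro v _
      split <;> [skip; exact le_refl 0]
      split <;> norm_num
    have hFsum : ∑ t, F t = m := by
      rw [hF]
      rw [Finset.sum_comm]
      simp only [Finset.sum_ite_eq, Finset.mem_univ, if_true]
      rw [Finset.sum_boole]
      simp only [Finset.filter_mem_eq_inter, Finset.univ_inter]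
      exact hcardcast.1
    have hGsum : ∑ t, G t = m := by
      rw [hG]
      rw [Finset.sum_comm]
      simp only [Finset.sum_ite_eq, Finset.mem_univ, if_true]
      rw [Finset.sum_boole]
      simp only [Finset.filter_mem_eq_inter, Finset.univ_inter]
      exact hcardcast.2
    have hzero : ∀ t, F t = 0 ∨ G t = 0 := by
      intro t
      rcases hpe _ (lineEdge_mem k t) with he | he
      · left
        rw [hF]
        apply Finset.sum_eq_zero
        intro v _
        by_cases hlin : lins n k v = t
        · rw [if_pos hlin]
          by_cases hvB : v ∈ B'
          · exfalso
            obtain ⟨p, hp, rfl⟩ := Finset.mem_image.mp hvB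
            have hpf : p ∈ (cells n).filter
                (fun p => lins n k ((p.1 : ZMod n), (p.2 : ZMod n)) = t) :=
              Finset.mem_filter.mpr ⟨hBc hp, hlin⟩
            have hmem : p ∈ ((cells n).filter
                (fun p => lins n k ((p.1 : ZMod n), (p.2 : ZMod n)) = t)) ∩ B :=
              Finset.mem_inter.mpr ⟨hpf, hp⟩
            rw [he] at hmem
            exact absurd hmem (Finset.notMem_empty p)
          · rw [if_neg hvB]
        · rw [if_neg hlin]
      · right
        rw [hG]
        apply Finset.sum_eq_zero
        intro v _
        by_cases hlin : lins n k v = t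
        · rw [if_pos hlin]
          by_cases hvW : v ∈ W'
          · exfalso
            obtain ⟨p, hp, rfl⟩ := Finset.mem_image.mp hvW
            have hpf : p ∈ (cells n).filter
                (fun p => lins n k ((p.1 : ZMod n), (p.2 : ZMod n)) = t) :=
              Finset.mem_filter.mpr ⟨hWc hp, hlin⟩
            have hmem : p ∈ ((cells n).filter
                (fun p => lins n k ((p.1 : ZMod n), (p.2 : ZMod n)) = t)) ∩ W :=
              Finset.mem_inter.mpr ⟨hpf, hp⟩
            rw [he] at hmem
            exact absurd hmem (Finset.notMem_empty p)
          · rw [if_neg hvW]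
        · rw [if_neg hlin]
    have hdb := dir_bound F G m hmpos hF0 hG0 hFsum hGsum hzero
    calc 4 * m ^ 2 / n ≤ ∑ t, (F t - G t) ^ 2 := hdb
      _ = P k := by
          rw [hP]
          apply Finset.sum_congr rfl
          intro t _
          rw [hFS t]
  -- combine
  have hsum4 : 4 * (4 * m ^ 2 / n) ≤ ∑ k, P k := by
    have h := Finset.sum_le_sum (fun k (_ : k ∈ (Finset.univ : Finset (Fin 4))) => hPge k)
    simpa using h
  have h16 : 16 * m ^ 2 ≤ 2 * m * n * n := by
    have h1 : 16 * m ^ 2 / n ≤ 2 * m * n := by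
      have heq : 16 * m ^ 2 / (n:ℝ) = 4 * (4 * m ^ 2 / n) := by ring
      rw [heq]
      exact le_trans hsum4 hmaster
    rw [div_le_iff₀ hnR] at h1
    linarith
  rw [hm] at hmpos ⊢
  rw [le_div_iff₀ (by norm_num : (0:ℝ) < 8)]
  nlinarith [h16, hmpos]
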